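/- Let A be a unital associative algebra over ℂ with derivation ∂, and define the vertex operator Y(a,x)b = (e^{x∂}a)·b. Then the nonlocal vertex algebra (A,∂) satisfies weak commutativity (i.e., for all a,b there is k ∈ ℕ with (x₁−x₂)^k Y(a,x₁)Y(b,x₂) = (x₁−x₂)^k Y(b,x₂)Y(a,x₁) as operators on A) if and only if A is commutative. -/

import Mathlib

/-- The double series `Y(a,x_v)Y(b,x_{1-v})c` for the Borcherds vertex operator
`Y(a,x)b = (e^{x∂}a)b`, as a formal power series in two variables; the outer operator `a`
acts in the variable `v : Fin 2`. -/
noncomputable def borchDoubleSeries {A : Type*} [Ring A] [Algebra ℂ A]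
    (dd : Module.End ℂ A) (a b c : A) (v : Fin 2) : MvPowerSeries (Fin 2) A :=
  fun e => (((e v).factorial : ℂ) * ((e (1 - v)).factorial : ℂ))⁻¹ •
    ((dd ^ (e v)) a * ((dd ^ (e (1 - v))) b * c))

/-- Extracting the coefficient of `x₀^k` from `(x₀ - x₁)^k * f` gives the constant
coefficient of `f`. -/
lemma key_coeff {A : Type*} [Ring A] (f : MvPowerSeries (Fin 2) A) (k : ℕ) :
    MvPowerSeries.coeff (Finsupp.single (0 : Fin 2) k)
      ((MvPowerSeries.X (0 : Fin 2) - MvPowerSeries.X 1 : MvPowerSeries (Fin 2) A) ^ k * f) =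
    MvPowerSeries.coeff 0 f := by
  induction k generalizing f with
  | zero => simp
  | succ k ih =>
    rw [pow_succ', mul_assoc]
    set g := (MvPowerSeries.X (0 : Fin 2) - MvPowerSeries.X 1 : MvPowerSeries (Fin 2) A) ^ k * f
    have h0 : MvPowerSeries.coeff (Finsupp.single (0 : Fin 2) (k + 1))
        (MvPowerSeries.X (0 : Fin 2) * g) = MvPowerSeries.coeff (Finsupp.single (0 : Fin 2) k) g := by
      have hsum : Finsupp.single (0 : Fin 2) (k + 1) =
          Finsupp.single (0 : Fin 2) 1 + Finsupp.single (0 : Fin 2) k := by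
        rw [← Finsupp.single_add]; ring_nf
      rw [MvPowerSeries.X, hsum, MvPowerSeries.coeff_add_monomial_mul, one_mul]
    have h1 : MvPowerSeries.coeff (Finsupp.single (0 : Fin 2) (k + 1))
        (MvPowerSeries.X (1 : Fin 2) * g) = 0 := by
      rw [MvPowerSeries.X, MvPowerSeries.coeff_monomial_mul, if_neg]
      intro hle
      have := hle 1
      simp [Finsupp.single_apply] at this
    rw [sub_mul, map_sub, h0, h1, sub_zero, ih]

/-- the Borcherds nonlocal vertex algebra `(A,∂)` satisfies weak commutativity
(∃ k, (x₁−x₂)^k Y(a,x₁)Y(b,x₂) = (x₁−x₂)^k Y(b,x₂)Y(a,x₁)) iff `A` is commutative. -/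
theorem borcherds_weak_commutativity_iff_commutative
    {A : Type*} [Ring A] [Algebra ℂ A] (dd : Module.End ℂ A)
    (hder : ∀ a b : A, dd (a * b) = dd a * b + a * dd b) :
    (∀ a b : A, ∃ k : ℕ, ∀ c : A,
        (MvPowerSeries.X (0 : Fin 2) - MvPowerSeries.X 1 : MvPowerSeries (Fin 2) A) ^ k *
            borchDoubleSeries dd a b c 0 =
          (MvPowerSeries.X (0 : Fin 2) - MvPowerSeries.X 1 : MvPowerSeries (Fin 2) A) ^ k *
            borchDoubleSeries dd b a c 1) ↔
      ∀ a b : A, a * b = b * a := by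
  constructor
  · intro h a b
    obtain ⟨k, hk⟩ := h a b
    have := congrArg (MvPowerSeries.coeff (Finsupp.single (0 : Fin 2) k)) (hk 1)
    rw [key_coeff, key_coeff] at this
    simpa [borchDoubleSeries, MvPowerSeries.coeff_apply] using this
  · intro hcomm a b
    refine ⟨0, fun c => ?_⟩
    congr 1
    funext e
    have h10 : (1 - 0 : Fin 2) = 1 := by decide
    have h11 : (1 - 1 : Fin 2) = 0 := by decide
    simp only [borchDoubleSeries, h10, h11]
    rw [mul_comm ((e 1).factorial : ℂ)]
    have : (dd ^ e 0) a * ((dd ^ e 1) b * c) = (dd ^ e 1) b * ((dd ^ e 0) a * c) := by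
      rw [← mul_assoc, hcomm ((dd ^ e 0) a) ((dd ^ e 1) b), mul_assoc]
    rw [this]
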